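/- Let b, σ : ℝ^d → ℝ (scalar case d = 1 for simplicity) be Lipschitz with linear growth, h ∈ (0,1], ϑ a real random variable with symmetric distribution and E|ϑ|⁴ < ∞. Set F(x,ϑ) = x + h·b(x) + √h·σ(x)·ϑ. Then there exists a constant K (depending only on the Lipschitz constants, E|ϑ|² and E|ϑ|⁴) such that E[(1 + |F(x,ϑ)|² + |F(y,ϑ)|²)·|F(x,ϑ) − F(y,ϑ)|²] ≤ (1 + K·h)·(1 + |x|² + |y|²)·|x − y|² for all x, y ∈ ℝ. -/

import Mathlib

open MeasureTheory
open scoped ENNReal NNReal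

private lemma abs_cube_le' (t : ℝ) : |t ^ 3| ≤ 1 + t ^ 4 := by
  rw [abs_pow]
  rcases le_or_gt (|t|) 1 with ht | ht
  · have h1 : |t| ^ 3 ≤ 1 := pow_le_one₀ (abs_nonneg t) ht
    nlinarith [pow_nonneg (abs_nonneg t) 4, sq_nonneg (t^2)]
  · have h4 : |t| ^ 3 ≤ |t| ^ 4 := pow_le_pow_right₀ ht.le (by norm_num)
    have he : |t| ^ 4 = t ^ 4 := by rw [show (4:ℕ) = 2*2 from rfl, pow_mul, pow_mul, sq_abs]
    nlinarith

private lemma odd_moment_zero {Ω : Type*} {mΩ : MeasurableSpace Ω} (μ : Measure Ω)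
    (ϑ : Ω → ℝ) (hm : Measurable ϑ)
    (hsymm : Measure.map ϑ μ = Measure.map (fun ω => -ϑ ω) μ)
    (n : ℕ) (hodd : Odd n) :
    ∫ ω, ϑ ω ^ n ∂μ = 0 := by
  have h1 : ∫ ω, ϑ ω ^ n ∂μ = ∫ t, t ^ n ∂(Measure.map ϑ μ) :=
    (integral_map hm.aemeasurable (measurable_id.pow_const n).aestronglyMeasurable).symm
  have h2 : ∫ t, t ^ n ∂(Measure.map (fun ω => -ϑ ω) μ) = ∫ ω, (-ϑ ω) ^ n ∂μ :=
    integral_map hm.neg.aemeasurable (measurable_id.pow_const n).aestronglyMeasurable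
  have h3 : ∫ ω, (-ϑ ω) ^ n ∂μ = - ∫ ω, ϑ ω ^ n ∂μ := by
    simp_rw [hodd.neg_pow, integral_neg]
  have h4 : ∫ t, t ^ n ∂(Measure.map ϑ μ)
      = ∫ t, t ^ n ∂(Measure.map (fun ω => -ϑ ω) μ) := by rw [hsymm]
  have := h1.trans (h4.trans (h2.trans h3))
  linarith

private lemma integral_poly4 {Ω : Type*} {mΩ : MeasurableSpace Ω} (μ : Measure Ω)
    [IsProbabilityMeasure μ] (ϑ : Ω → ℝ) (c0 c1 c2 c3 c4 : ℝ)
    (i1 : Integrable ϑ μ) (i2 : Integrable (fun ω => ϑ ω ^ 2) μ)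
    (i3 : Integrable (fun ω => ϑ ω ^ 3) μ) (i4 : Integrable (fun ω => ϑ ω ^ 4) μ)
    (m1 : ∫ ω, ϑ ω ∂μ = 0) (m3 : ∫ ω, ϑ ω ^ 3 ∂μ = 0) :
    ∫ ω, (c0 + c1 * ϑ ω + c2 * ϑ ω ^ 2 + c3 * ϑ ω ^ 3 + c4 * ϑ ω ^ 4) ∂μ
      = c0 + c2 * (∫ ω, ϑ ω ^ 2 ∂μ) + c4 * (∫ ω, ϑ ω ^ 4 ∂μ) := by
  have I1 : Integrable (fun ω => c0 + c1 * ϑ ω) μ := by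
    exact (integrable_const c0).add (i1.const_mul c1)
  have I2 : Integrable (fun ω => c0 + c1 * ϑ ω + c2 * ϑ ω ^ 2) μ := by
    exact I1.add (i2.const_mul c2)
  have I3 : Integrable (fun ω => c0 + c1 * ϑ ω + c2 * ϑ ω ^ 2 + c3 * ϑ ω ^ 3) μ := by
    exact I2.add (i3.const_mul c3)
  calc ∫ ω, (c0 + c1 * ϑ ω + c2 * ϑ ω ^ 2 + c3 * ϑ ω ^ 3 + c4 * ϑ ω ^ 4) ∂μ
      = (∫ ω, (c0 + c1 * ϑ ω + c2 * ϑ ω ^ 2 + c3 * ϑ ω ^ 3) ∂μ)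
        + ∫ ω, c4 * ϑ ω ^ 4 ∂μ := integral_add I3 (i4.const_mul c4)
    _ = ((∫ ω, (c0 + c1 * ϑ ω + c2 * ϑ ω ^ 2) ∂μ) + ∫ ω, c3 * ϑ ω ^ 3 ∂μ)
        + ∫ ω, c4 * ϑ ω ^ 4 ∂μ := by rw [integral_add I2 (i3.const_mul c3)]
    _ = (((∫ ω, (c0 + c1 * ϑ ω) ∂μ) + ∫ ω, c2 * ϑ ω ^ 2 ∂μ) + ∫ ω, c3 * ϑ ω ^ 3 ∂μ)
        + ∫ ω, c4 * ϑ ω ^ 4 ∂μ := by rw [integral_add I1 (i2.const_mul c2)]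
    _ = ((((∫ ω, (c0 : ℝ) ∂μ) + ∫ ω, c1 * ϑ ω ∂μ) + ∫ ω, c2 * ϑ ω ^ 2 ∂μ)
        + ∫ ω, c3 * ϑ ω ^ 3 ∂μ) + ∫ ω, c4 * ϑ ω ^ 4 ∂μ := by
        rw [integral_add (integrable_const c0) (i1.const_mul c1)]
    _ = c0 + c2 * (∫ ω, ϑ ω ^ 2 ∂μ) + c4 * (∫ ω, ϑ ω ^ 4 ∂μ) := by
        rw [integral_const, integral_const_mul, integral_const_mul, integral_const_mul,
          integral_const_mul, m1, m3]
        simp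

private lemma poly_expand (x y hh s bx by' sx sy t : ℝ) :
    (1 + |x + hh * bx + s * sx * t| ^ 2 + |y + hh * by' + s * sy * t| ^ 2)
        * |(x + hh * bx + s * sx * t) - (y + hh * by' + s * sy * t)| ^ 2
    = (1 + (x + hh * bx) ^ 2 + (y + hh * by') ^ 2) * ((x + hh * bx) - (y + hh * by')) ^ 2
      + (2 * s * ((x + hh * bx) * sx + (y + hh * by') * sy)
            * ((x + hh * bx) - (y + hh * by')) ^ 2
         + 2 * s * (1 + (x + hh * bx) ^ 2 + (y + hh * by') ^ 2)
            * (((x + hh * bx) - (y + hh * by')) * (sx - sy))) * t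
      + (s ^ 2 * (sx ^ 2 + sy ^ 2) * ((x + hh * bx) - (y + hh * by')) ^ 2
         + s ^ 2 * (1 + (x + hh * bx) ^ 2 + (y + hh * by') ^ 2) * (sx - sy) ^ 2
         + 4 * s ^ 2 * ((x + hh * bx) * sx + (y + hh * by') * sy)
            * (((x + hh * bx) - (y + hh * by')) * (sx - sy))) * t ^ 2
      + (2 * s ^ 3 * (sx ^ 2 + sy ^ 2) * (((x + hh * bx) - (y + hh * by')) * (sx - sy))
         + 2 * s ^ 3 * ((x + hh * bx) * sx + (y + hh * by') * sy) * (sx - sy) ^ 2) * t ^ 3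
      + (s ^ 4 * (sx ^ 2 + sy ^ 2) * (sx - sy) ^ 2) * t ^ 4 := by
  simp only [sq_abs]
  ring

private lemma growth_bound (f : ℝ → ℝ) (L : NNReal) (hf : LipschitzWith L f) (z : ℝ) :
    |f z| ≤ (|f 0| + L) * (1 + |z|) := by
  have h1' := hf.dist_le_mul z 0
  rw [Real.dist_eq, Real.dist_eq, sub_zero] at h1'
  have h2' := abs_sub_abs_le_abs_sub (f z) (f 0)
  have h3' : (0:ℝ) ≤ |f 0| * |z| := mul_nonneg (abs_nonneg _) (abs_nonneg _)
  have h4' : (0:ℝ) ≤ (L:ℝ) := L.coe_nonneg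
  linarith only [h1', h2', h3', h4']

set_option maxHeartbeats 1000000 in
private lemma final_ineq (x y h bx bY sx sy Lb Lσ Bb Sσ m2 m4 : ℝ)
    (h0 : 0 < h) (h1 : h ≤ 1) (hm2 : 0 ≤ m2) (hm4 : 0 ≤ m4)
    (hLb : 0 ≤ Lb) (hLσ : 0 ≤ Lσ) (hBb : 0 ≤ Bb) (hSσ : 0 ≤ Sσ)
    (hbd : |bx - bY| ≤ Lb * |x - y|) (hsd : |sx - sy| ≤ Lσ * |x - y|)
    (hgbx : |bx| ≤ Bb * (1 + |x|)) (hgby : |bY| ≤ Bb * (1 + |y|))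
    (hgsx : |sx| ≤ Sσ * (1 + |x|)) (hgsy : |sy| ≤ Sσ * (1 + |y|)) :
    (1 + (x + h * bx) ^ 2 + (y + h * bY) ^ 2) * ((x + h * bx) - (y + h * bY)) ^ 2
    + (h * (sx ^ 2 + sy ^ 2) * ((x + h * bx) - (y + h * bY)) ^ 2
       + h * (1 + (x + h * bx) ^ 2 + (y + h * bY) ^ 2) * (sx - sy) ^ 2
       + 4 * h * ((x + h * bx) * sx + (y + h * bY) * sy)
          * (((x + h * bx) - (y + h * bY)) * (sx - sy))) * m2
    + (h ^ 2 * (sx ^ 2 + sy ^ 2) * (sx - sy) ^ 2) * m4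
    ≤ (1 + ((2 * Lb + Lb ^ 2) + (6 * Bb + 4 * Bb ^ 2)
          + (2 * Lb + Lb ^ 2) * (6 * Bb + 4 * Bb ^ 2)
          + m2 * (4 * Sσ ^ 2 * (1 + (2 * Lb + Lb ^ 2))
              + (1 + (6 * Bb + 4 * Bb ^ 2)) * Lσ ^ 2
              + 16 * (1 + Bb) * Sσ * (1 + Lb) * Lσ)
          + m4 * (4 * Sσ ^ 2 * Lσ ^ 2)) * h)
        * (1 + x ^ 2 + y ^ 2) * (x - y) ^ 2 := by
  set cA : ℝ := 2 * Lb + Lb ^ 2 with hcAdef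
  set cQ : ℝ := 6 * Bb + 4 * Bb ^ 2 with hcQdef
  set c2' : ℝ := 4 * Sσ ^ 2 * (1 + cA) + (1 + cQ) * Lσ ^ 2
      + 16 * (1 + Bb) * Sσ * (1 + Lb) * Lσ with hc2def
  set c4' : ℝ := 4 * Sσ ^ 2 * Lσ ^ 2 with hc4def
  have hcA : 0 ≤ cA := by positivity
  have hcQ : 0 ≤ cQ := by positivity
  have hc2' : 0 ≤ c2' := by positivity
  have hc4' : 0 ≤ c4' := by positivity
  set A : ℝ := (x + h * bx) - (y + h * bY) with hAdef
  set C : ℝ := sx - sy with hCdef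
  set Q : ℝ := 1 + x ^ 2 + y ^ 2 with hQdef
  set D : ℝ := (x - y) ^ 2 with hDdef
  have hQ0 : 0 ≤ Q := by rw [hQdef]; positivity
  have hD0 : 0 ≤ D := by rw [hDdef]; positivity
  -- bound on A^2
  have HA : A ^ 2 ≤ (1 + cA * h) * D := by
    have e1 : (x - y) * (bx - bY) ≤ |x - y| * |bx - bY| := by
      rw [← abs_mul]; exact le_abs_self _
    have e2 : |x - y| * |bx - bY| ≤ |x - y| * (Lb * |x - y|) :=
      mul_le_mul_of_nonneg_left hbd (abs_nonneg _)
    have e3 : (bx - bY) ^ 2 ≤ (Lb * |x - y|) ^ 2 := by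
      rw [← sq_abs (bx - bY)]; exact pow_le_pow_left₀ (abs_nonneg _) hbd 2
    have e2' : |x - y| * (Lb * |x - y|) = Lb * (x - y) ^ 2 := by
      rw [← sq_abs (x - y)]; ring
    have e3' : (Lb * |x - y|) ^ 2 = Lb ^ 2 * (x - y) ^ 2 := by
      rw [mul_pow, sq_abs]
    have g1 : (x - y) * (bx - bY) ≤ Lb * (x - y) ^ 2 := by
      linarith only [e1, e2, e2']
    have g2 : (bx - bY) ^ 2 ≤ Lb ^ 2 * (x - y) ^ 2 := e3' ▸ e3
    have g3 : h * ((x - y) * (bx - bY)) ≤ h * (Lb * (x - y) ^ 2) :=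
      mul_le_mul_of_nonneg_left g1 h0.le
    have g4 : h * (bx - bY) ^ 2 ≤ Lb ^ 2 * (x - y) ^ 2 := by
      calc h * (bx - bY) ^ 2 ≤ 1 * (bx - bY) ^ 2 :=
            mul_le_mul_of_nonneg_right h1 (sq_nonneg _)
        _ = (bx - bY) ^ 2 := one_mul _
        _ ≤ Lb ^ 2 * (x - y) ^ 2 := g2
    have g5 : h * (h * (bx - bY) ^ 2) ≤ h * (Lb ^ 2 * (x - y) ^ 2) :=
      mul_le_mul_of_nonneg_left g4 h0.le
    have hA2 : A = (x - y) + h * (bx - bY) := by rw [hAdef]; ring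
    rw [hA2, hcAdef, hDdef]
    nlinarith only [g3, g5]
  have HA' : A ^ 2 ≤ (1 + cA) * D := by
    have w : 0 ≤ cA * (1 - h) * D :=
      mul_nonneg (mul_nonneg hcA (by linarith)) hD0
    nlinarith only [HA, w]
  -- growth bound on the drift-shifted points
  have hQax : ∀ z bz : ℝ, |bz| ≤ Bb * (1 + |z|) →
      (z + h * bz) ^ 2 ≤ z ^ 2 + (3 * Bb + 2 * Bb ^ 2) * h * (1 + z ^ 2) := by
    intro z bz hg
    have e1 : z * bz ≤ |z| * (Bb * (1 + |z|)) := by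
      calc z * bz ≤ |z * bz| := le_abs_self _
        _ = |z| * |bz| := abs_mul _ _
        _ ≤ |z| * (Bb * (1 + |z|)) := mul_le_mul_of_nonneg_left hg (abs_nonneg _)
    have e2 : bz ^ 2 ≤ (Bb * (1 + |z|)) ^ 2 := by
      rw [← sq_abs bz]; exact pow_le_pow_left₀ (abs_nonneg _) hg 2
    have eq1 : |z| * (Bb * (1 + |z|)) = Bb * |z| + Bb * z ^ 2 := by
      rw [← sq_abs z]; ring
    have w2 := mul_nonneg hBb (sq_nonneg (|z| - 1))
    have weq : Bb * (|z| - 1) ^ 2 = Bb * z ^ 2 - 2 * (Bb * |z|) + Bb := by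
      rw [← sq_abs z]; ring
    rw [weq] at w2
    have k1 : z * bz ≤ (3/2) * Bb * (1 + z ^ 2) := by
      linarith only [e1, eq1, w2, hBb]
    have eq2 : (Bb * (1 + |z|)) ^ 2 = Bb ^ 2 + 2 * (Bb ^ 2 * |z|) + Bb ^ 2 * z ^ 2 := by
      rw [← sq_abs z]; ring
    have w3 := mul_nonneg (mul_nonneg hBb hBb) (sq_nonneg (|z| - 1))
    have weq3 : Bb * Bb * (|z| - 1) ^ 2 = Bb ^ 2 * z ^ 2 - 2 * (Bb ^ 2 * |z|) + Bb ^ 2 := by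
      rw [← sq_abs z]; ring
    rw [weq3] at w3
    have k2 : bz ^ 2 ≤ 2 * Bb ^ 2 * (1 + z ^ 2) := by
      linarith only [e2, eq2, w3, hBb, mul_nonneg hBb hBb]
    have k3 : h * (z * bz) ≤ h * ((3/2) * Bb * (1 + z ^ 2)) :=
      mul_le_mul_of_nonneg_left k1 h0.le
    have k4 : h * bz ^ 2 ≤ 2 * Bb ^ 2 * (1 + z ^ 2) := by
      calc h * bz ^ 2 ≤ 1 * bz ^ 2 := mul_le_mul_of_nonneg_right h1 (sq_nonneg _)
        _ = bz ^ 2 := one_mul _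
        _ ≤ 2 * Bb ^ 2 * (1 + z ^ 2) := k2
    have k5 : h * (h * bz ^ 2) ≤ h * (2 * Bb ^ 2 * (1 + z ^ 2)) :=
      mul_le_mul_of_nonneg_left k4 h0.le
    nlinarith only [k3, k5]
  have HQ : 1 + (x + h * bx) ^ 2 + (y + h * bY) ^ 2 ≤ (1 + cQ * h) * Q := by
    have e1 := hQax x bx hgbx
    have e2 := hQax y bY hgby
    have w : 0 ≤ (3 * Bb + 2 * Bb ^ 2) * h * (x ^ 2 + y ^ 2) :=
      mul_nonneg (mul_nonneg (by positivity) h0.le) (by positivity)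
    rw [hcQdef, hQdef]
    nlinarith only [e1, e2, w]
  have HQ' : 1 + (x + h * bx) ^ 2 + (y + h * bY) ^ 2 ≤ (1 + cQ) * Q := by
    have w : 0 ≤ cQ * (1 - h) * Q :=
      mul_nonneg (mul_nonneg hcQ (by linarith)) hQ0
    nlinarith only [HQ, w]
  -- bound on C^2
  have HC : C ^ 2 ≤ Lσ ^ 2 * D := by
    rw [hCdef, hDdef, ← sq_abs (sx - sy)]
    calc |sx - sy| ^ 2 ≤ (Lσ * |x - y|) ^ 2 := pow_le_pow_left₀ (abs_nonneg _) hsd 2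
      _ = Lσ ^ 2 * (x - y) ^ 2 := by rw [mul_pow, sq_abs]
  -- bound on sx^2 + sy^2
  have HS : sx ^ 2 + sy ^ 2 ≤ 4 * Sσ ^ 2 * Q := by
    have e1 : sx ^ 2 ≤ (Sσ * (1 + |x|)) ^ 2 := by
      rw [← sq_abs sx]; exact pow_le_pow_left₀ (abs_nonneg _) hgsx 2
    have e2 : sy ^ 2 ≤ (Sσ * (1 + |y|)) ^ 2 := by
      rw [← sq_abs sy]; exact pow_le_pow_left₀ (abs_nonneg _) hgsy 2
    have eqx : (Sσ * (1 + |x|)) ^ 2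
        = Sσ ^ 2 + Sσ ^ 2 * (2 * |x|) + Sσ ^ 2 * x ^ 2 := by
      rw [← sq_abs x]; ring
    have eqy : (Sσ * (1 + |y|)) ^ 2
        = Sσ ^ 2 + Sσ ^ 2 * (2 * |y|) + Sσ ^ 2 * y ^ 2 := by
      rw [← sq_abs y]; ring
    have habsx : 2 * |x| ≤ 1 + x ^ 2 := by
      have := sq_nonneg (|x| - 1)
      have e : (|x| - 1) ^ 2 = x ^ 2 - 2 * |x| + 1 := by rw [← sq_abs x]; ring
      linarith only [e ▸ this]
    have habsy : 2 * |y| ≤ 1 + y ^ 2 := by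
      have := sq_nonneg (|y| - 1)
      have e : (|y| - 1) ^ 2 = y ^ 2 - 2 * |y| + 1 := by rw [← sq_abs y]; ring
      linarith only [e ▸ this]
    have mx : Sσ ^ 2 * (2 * |x|) ≤ Sσ ^ 2 * (1 + x ^ 2) :=
      mul_le_mul_of_nonneg_left habsx (sq_nonneg _)
    have my : Sσ ^ 2 * (2 * |y|) ≤ Sσ ^ 2 * (1 + y ^ 2) :=
      mul_le_mul_of_nonneg_left habsy (sq_nonneg _)
    rw [hQdef]
    nlinarith only [e1, e2, eqx, eqy, mx, my,
      mul_nonneg (sq_nonneg Sσ) (sq_nonneg x),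
      mul_nonneg (sq_nonneg Sσ) (sq_nonneg y)]
  -- cross term
  have Hu1 : |(x + h * bx) * sx + (y + h * bY) * sy| ≤ 4 * (1 + Bb) * Sσ * Q := by
    have hax : ∀ z bz : ℝ, |bz| ≤ Bb * (1 + |z|) → |z + h * bz| ≤ (1 + Bb) * (1 + |z|) := by
      intro z bz hg
      calc |z + h * bz| ≤ |z| + |h * bz| := abs_add_le _ _
        _ = |z| + h * |bz| := by rw [abs_mul, abs_of_pos h0]
        _ ≤ (1 + Bb) * (1 + |z|) := by
            have w1 : 0 ≤ (1 - h) * |bz| := mul_nonneg (by linarith) (abs_nonneg _)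
            have w2 : 0 ≤ Bb * |z| := mul_nonneg hBb (abs_nonneg _)
            nlinarith only [hg, w1, w2, abs_nonneg z]
    have t1 : |(x + h * bx) * sx| ≤ ((1 + Bb) * (1 + |x|)) * (Sσ * (1 + |x|)) := by
      rw [abs_mul]
      exact mul_le_mul (hax x bx hgbx) hgsx (abs_nonneg _) (by positivity)
    have t2 : |(y + h * bY) * sy| ≤ ((1 + Bb) * (1 + |y|)) * (Sσ * (1 + |y|)) := by
      rw [abs_mul]
      exact mul_le_mul (hax y bY hgby) hgsy (abs_nonneg _) (by positivity)
    have t3 := abs_add_le ((x + h * bx) * sx) ((y + h * bY) * sy)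
    have habsx : 2 * |x| ≤ 1 + x ^ 2 := by
      have := sq_nonneg (|x| - 1)
      have e : (|x| - 1) ^ 2 = x ^ 2 - 2 * |x| + 1 := by rw [← sq_abs x]; ring
      linarith only [e ▸ this]
    have habsy : 2 * |y| ≤ 1 + y ^ 2 := by
      have := sq_nonneg (|y| - 1)
      have e : (|y| - 1) ^ 2 = y ^ 2 - 2 * |y| + 1 := by rw [← sq_abs y]; ring
      linarith only [e ▸ this]
    have eqx : ((1 + Bb) * (1 + |x|)) * (Sσ * (1 + |x|))
        = (1 + Bb) * Sσ + ((1 + Bb) * Sσ) * (2 * |x|) + (1 + Bb) * Sσ * x ^ 2 := by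
      rw [← sq_abs x]; ring
    have eqy : ((1 + Bb) * (1 + |y|)) * (Sσ * (1 + |y|))
        = (1 + Bb) * Sσ + ((1 + Bb) * Sσ) * (2 * |y|) + (1 + Bb) * Sσ * y ^ 2 := by
      rw [← sq_abs y]; ring
    have mx : ((1 + Bb) * Sσ) * (2 * |x|) ≤ ((1 + Bb) * Sσ) * (1 + x ^ 2) :=
      mul_le_mul_of_nonneg_left habsx (by positivity)
    have my : ((1 + Bb) * Sσ) * (2 * |y|) ≤ ((1 + Bb) * Sσ) * (1 + y ^ 2) :=
      mul_le_mul_of_nonneg_left habsy (by positivity)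
    have w3 : 0 ≤ ((1 + Bb) * Sσ) * x ^ 2 :=
      mul_nonneg (mul_nonneg (by linarith) hSσ) (sq_nonneg _)
    have w4 : 0 ≤ ((1 + Bb) * Sσ) * y ^ 2 :=
      mul_nonneg (mul_nonneg (by linarith) hSσ) (sq_nonneg _)
    rw [hQdef]
    nlinarith only [t1, t2, t3, eqx, eqy, mx, my, w3, w4]
  have Hu2 : |A * C| ≤ (1 + Lb) * Lσ * D := by
    have hAabs : |A| ≤ (1 + Lb) * |x - y| := by
      have hA2 : A = (x - y) + h * (bx - bY) := by rw [hAdef]; ring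
      rw [hA2]
      calc |(x - y) + h * (bx - bY)| ≤ |x - y| + |h * (bx - bY)| := abs_add_le _ _
        _ = |x - y| + h * |bx - bY| := by rw [abs_mul, abs_of_pos h0]
        _ ≤ (1 + Lb) * |x - y| := by
            have w1 : 0 ≤ (1 - h) * |bx - bY| := mul_nonneg (by linarith) (abs_nonneg _)
            nlinarith only [hbd, w1, abs_nonneg (x - y)]
    rw [abs_mul, hDdef]
    calc |A| * |C| ≤ ((1 + Lb) * |x - y|) * (Lσ * |x - y|) :=
          mul_le_mul hAabs (hCdef ▸ hsd) (abs_nonneg _) (by positivity)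
      _ = (1 + Lb) * Lσ * (x - y) ^ 2 := by rw [← sq_abs (x - y)]; ring
  have Hcross : ((x + h * bx) * sx + (y + h * bY) * sy) * (A * C)
      ≤ (4 * (1 + Bb) * Sσ * Q) * ((1 + Lb) * Lσ * D) := by
    calc ((x + h * bx) * sx + (y + h * bY) * sy) * (A * C)
        ≤ |((x + h * bx) * sx + (y + h * bY) * sy) * (A * C)| := le_abs_self _
      _ = |(x + h * bx) * sx + (y + h * bY) * sy| * |A * C| := abs_mul _ _
      _ ≤ (4 * (1 + Bb) * Sσ * Q) * ((1 + Lb) * Lσ * D) :=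
          mul_le_mul Hu1 Hu2 (abs_nonneg _) (by positivity)
  -- assemble
  have H1 : (1 + (x + h * bx) ^ 2 + (y + h * bY) ^ 2) * A ^ 2
      ≤ (1 + (cA + cQ + cA * cQ) * h) * (Q * D) := by
    have step : (1 + (x + h * bx) ^ 2 + (y + h * bY) ^ 2) * A ^ 2
        ≤ ((1 + cQ * h) * Q) * ((1 + cA * h) * D) :=
      mul_le_mul HQ HA (sq_nonneg _) (by positivity)
    have w : 0 ≤ ((cA * cQ) * (h * (1 - h))) * (Q * D) :=
      mul_nonneg (mul_nonneg (mul_nonneg hcA hcQ)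
        (mul_nonneg h0.le (by linarith))) (mul_nonneg hQ0 hD0)
    nlinarith only [step, w]
  have HT2 : (sx ^ 2 + sy ^ 2) * A ^ 2
      + (1 + (x + h * bx) ^ 2 + (y + h * bY) ^ 2) * C ^ 2
      + 4 * (((x + h * bx) * sx + (y + h * bY) * sy) * (A * C))
      ≤ c2' * (Q * D) := by
    have t1 : (sx ^ 2 + sy ^ 2) * A ^ 2 ≤ (4 * Sσ ^ 2 * Q) * ((1 + cA) * D) :=
      mul_le_mul HS HA' (sq_nonneg _) (by positivity)
    have t2 : (1 + (x + h * bx) ^ 2 + (y + h * bY) ^ 2) * C ^ 2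
        ≤ ((1 + cQ) * Q) * (Lσ ^ 2 * D) :=
      mul_le_mul HQ' HC (sq_nonneg _) (by positivity)
    rw [hc2def]
    nlinarith only [t1, t2, Hcross]
  have HT4 : (sx ^ 2 + sy ^ 2) * C ^ 2 ≤ c4' * (Q * D) := by
    have t1 := mul_le_mul HS HC (sq_nonneg C) (by positivity : (0:ℝ) ≤ 4 * Sσ ^ 2 * Q)
    rw [hc4def]; nlinarith only [t1]
  have H2 : (h * (sx ^ 2 + sy ^ 2) * A ^ 2
      + h * (1 + (x + h * bx) ^ 2 + (y + h * bY) ^ 2) * C ^ 2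
      + 4 * h * ((x + h * bx) * sx + (y + h * bY) * sy) * (A * C)) * m2
      ≤ h * (c2' * (Q * D)) * m2 := by
    have e : h * (sx ^ 2 + sy ^ 2) * A ^ 2
        + h * (1 + (x + h * bx) ^ 2 + (y + h * bY) ^ 2) * C ^ 2
        + 4 * h * ((x + h * bx) * sx + (y + h * bY) * sy) * (A * C)
        = h * ((sx ^ 2 + sy ^ 2) * A ^ 2
          + (1 + (x + h * bx) ^ 2 + (y + h * bY) ^ 2) * C ^ 2
          + 4 * (((x + h * bx) * sx + (y + h * bY) * sy) * (A * C))) := by ring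
    rw [e]
    exact mul_le_mul_of_nonneg_right (mul_le_mul_of_nonneg_left HT2 h0.le) hm2
  have H3 : (h ^ 2 * (sx ^ 2 + sy ^ 2) * C ^ 2) * m4 ≤ h * (c4' * (Q * D)) * m4 := by
    have e2 : h ^ 2 * ((sx ^ 2 + sy ^ 2) * C ^ 2) * m4 ≤ h ^ 2 * (c4' * (Q * D)) * m4 :=
      mul_le_mul_of_nonneg_right (mul_le_mul_of_nonneg_left HT4 (by positivity)) hm4
    have w : 0 ≤ (c4' * (Q * D)) * ((h * (1 - h)) * m4) :=
      mul_nonneg (mul_nonneg hc4' (mul_nonneg hQ0 hD0))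
        (mul_nonneg (mul_nonneg h0.le (by linarith)) hm4)
    nlinarith only [e2, w]
  nlinarith only [H1, H2, H3]

set_option maxHeartbeats 1000000 in
theorem euler_kernel_symmetric_estimate
    {Ω : Type*} {mΩ : MeasurableSpace Ω} (μ : Measure Ω) [IsProbabilityMeasure μ]
    (b σ : ℝ → ℝ) (Lb Lσ : NNReal)
    (hb : LipschitzWith Lb b) (hσ : LipschitzWith Lσ σ)
    (ϑ : Ω → ℝ) (hϑmeas : Measurable ϑ)
    (hsymm : Measure.map ϑ μ = Measure.map (fun ω => -ϑ ω) μ)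
    (hϑ4 : MemLp ϑ 4 μ) :
    ∃ K : ℝ, 0 ≤ K ∧ ∀ h ∈ Set.Ioc (0 : ℝ) 1, ∀ x y : ℝ,
      (∫ ω, (1 + |x + h * b x + Real.sqrt h * σ x * ϑ ω| ^ 2
              + |y + h * b y + Real.sqrt h * σ y * ϑ ω| ^ 2)
          * |(x + h * b x + Real.sqrt h * σ x * ϑ ω)
              - (y + h * b y + Real.sqrt h * σ y * ϑ ω)| ^ 2 ∂μ)
        ≤ (1 + K * h) * (1 + |x| ^ 2 + |y| ^ 2) * |x - y| ^ 2 := by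
  -- integrability of moments
  have i4 : Integrable (fun ω => ϑ ω ^ 4) μ := by
    have := hϑ4.integrable_norm_rpow (by norm_num) (by norm_num)
    refine this.congr (ae_of_all _ fun ω => ?_)
    show ‖ϑ ω‖ ^ ((4:ℝ≥0∞)).toReal = ϑ ω ^ 4
    have h4 : ((4:ℝ≥0∞)).toReal = ((4:ℕ):ℝ) := by simp
    rw [h4, Real.norm_eq_abs, Real.rpow_natCast]
    exact Even.pow_abs ⟨2, rfl⟩ _
  have i2 : Integrable (fun ω => ϑ ω ^ 2) μ :=
    (hϑ4.mono_exponent (by norm_num)).integrable_sq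
  have i1 : Integrable ϑ μ :=
    memLp_one_iff_integrable.mp (hϑ4.mono_exponent (by norm_num))
  have i3 : Integrable (fun ω => ϑ ω ^ 3) μ := by
    refine ((integrable_const (1:ℝ)).add i4).mono'
      ((hϑmeas.pow_const 3).aestronglyMeasurable) (ae_of_all _ fun ω => ?_)
    simpa [Real.norm_eq_abs] using abs_cube_le' (ϑ ω)
  have m1 : ∫ ω, ϑ ω ∂μ = 0 := by
    have := odd_moment_zero μ ϑ hϑmeas hsymm 1 ⟨0, by norm_num⟩
    simpa using this
  have m3 : ∫ ω, ϑ ω ^ 3 ∂μ = 0 := odd_moment_zero μ ϑ hϑmeas hsymm 3 ⟨1, by norm_num⟩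
  set m2 : ℝ := ∫ ω, ϑ ω ^ 2 ∂μ with hm2def
  set m4 : ℝ := ∫ ω, ϑ ω ^ 4 ∂μ with hm4def
  have hm2 : 0 ≤ m2 := integral_nonneg fun ω => sq_nonneg _
  have hm4 : 0 ≤ m4 := integral_nonneg fun ω => by positivity
  refine ⟨(2 * (Lb:ℝ) + (Lb:ℝ) ^ 2) + (6 * (|b 0| + (Lb:ℝ)) + 4 * (|b 0| + (Lb:ℝ)) ^ 2)
      + (2 * (Lb:ℝ) + (Lb:ℝ) ^ 2) * (6 * (|b 0| + (Lb:ℝ)) + 4 * (|b 0| + (Lb:ℝ)) ^ 2)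
      + m2 * (4 * (|σ 0| + (Lσ:ℝ)) ^ 2 * (1 + (2 * (Lb:ℝ) + (Lb:ℝ) ^ 2))
          + (1 + (6 * (|b 0| + (Lb:ℝ)) + 4 * (|b 0| + (Lb:ℝ)) ^ 2)) * (Lσ:ℝ) ^ 2
          + 16 * (1 + (|b 0| + (Lb:ℝ))) * (|σ 0| + (Lσ:ℝ)) * (1 + (Lb:ℝ)) * (Lσ:ℝ))
      + m4 * (4 * (|σ 0| + (Lσ:ℝ)) ^ 2 * (Lσ:ℝ) ^ 2), ?_, ?_⟩
  · have hbase : (0:ℝ) ≤ (2 * (Lb:ℝ) + (Lb:ℝ) ^ 2)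
        + (6 * (|b 0| + (Lb:ℝ)) + 4 * (|b 0| + (Lb:ℝ)) ^ 2)
        + (2 * (Lb:ℝ) + (Lb:ℝ) ^ 2) * (6 * (|b 0| + (Lb:ℝ)) + 4 * (|b 0| + (Lb:ℝ)) ^ 2) := by
      positivity
    have h2 : (0:ℝ) ≤ m2 * (4 * (|σ 0| + (Lσ:ℝ)) ^ 2 * (1 + (2 * (Lb:ℝ) + (Lb:ℝ) ^ 2))
          + (1 + (6 * (|b 0| + (Lb:ℝ)) + 4 * (|b 0| + (Lb:ℝ)) ^ 2)) * (Lσ:ℝ) ^ 2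
          + 16 * (1 + (|b 0| + (Lb:ℝ))) * (|σ 0| + (Lσ:ℝ)) * (1 + (Lb:ℝ)) * (Lσ:ℝ)) :=
      mul_nonneg hm2 (by positivity)
    have h4 : (0:ℝ) ≤ m4 * (4 * (|σ 0| + (Lσ:ℝ)) ^ 2 * (Lσ:ℝ) ^ 2) :=
      mul_nonneg hm4 (by positivity)
    linarith
  rintro h ⟨h0, h1⟩ x y
  have hs2 : Real.sqrt h ^ 2 = h := Real.sq_sqrt h0.le
  have hs4 : Real.sqrt h ^ 4 = h ^ 2 := by
    rw [show (4:ℕ) = 2 * 2 from rfl, pow_mul, hs2]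
  have heq : (∫ ω, (1 + |x + h * b x + Real.sqrt h * σ x * ϑ ω| ^ 2
              + |y + h * b y + Real.sqrt h * σ y * ϑ ω| ^ 2)
          * |(x + h * b x + Real.sqrt h * σ x * ϑ ω)
              - (y + h * b y + Real.sqrt h * σ y * ϑ ω)| ^ 2 ∂μ)
      = (1 + (x + h * b x) ^ 2 + (y + h * b y) ^ 2) * ((x + h * b x) - (y + h * b y)) ^ 2
      + (Real.sqrt h ^ 2 * (σ x ^ 2 + σ y ^ 2) * ((x + h * b x) - (y + h * b y)) ^ 2
         + Real.sqrt h ^ 2 * (1 + (x + h * b x) ^ 2 + (y + h * b y) ^ 2) * (σ x - σ y) ^ 2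
         + 4 * Real.sqrt h ^ 2 * ((x + h * b x) * σ x + (y + h * b y) * σ y)
            * (((x + h * b x) - (y + h * b y)) * (σ x - σ y))) * m2
      + (Real.sqrt h ^ 4 * (σ x ^ 2 + σ y ^ 2) * (σ x - σ y) ^ 2) * m4 := by
    simp_rw [poly_expand x y h (Real.sqrt h) (b x) (b y) (σ x) (σ y)]
    exact integral_poly4 μ ϑ _ _ _ _ _ i1 i2 i3 i4 m1 m3
  rw [heq, sq_abs, sq_abs, sq_abs, hs2, hs4]
  have hbd : |b x - b y| ≤ (Lb:ℝ) * |x - y| := by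
    have := hb.dist_le_mul x y; rwa [Real.dist_eq, Real.dist_eq] at this
  have hsd : |σ x - σ y| ≤ (Lσ:ℝ) * |x - y| := by
    have := hσ.dist_le_mul x y; rwa [Real.dist_eq, Real.dist_eq] at this
  exact final_ineq x y h (b x) (b y) (σ x) (σ y) (Lb:ℝ) (Lσ:ℝ)
    (|b 0| + (Lb:ℝ)) (|σ 0| + (Lσ:ℝ)) m2 m4 h0 h1 hm2 hm4
    Lb.coe_nonneg Lσ.coe_nonneg (by positivity) (by positivity)
    hbd hsd (growth_bound b Lb hb x) (growth_bound b Lb hb y)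
    (growth_bound σ Lσ hσ x) (growth_bound σ Lσ hσ y)
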